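/- arXiv:2007.11883 — 3 statements merged into one kernel-verified Lean document; each statement's English description precedes it below -/
import Mathlib

section
/- Let (y_n), n = 0,1,2,..., be a sequence of positive real numbers satisfying y_{n+1} ≤ c·b^n·y_n^{1+α} for all n, where b > 1, c > 0, α > 0. If y_0 ≤ c^{-1/α}·b^{-1/α²}, then lim_{n→∞} y_n = 0. -/
open Filter

theorem stmt_0 (c b α : ℝ) (hb : 1 < b) (hc : 0 < c) (hα : 0 < α)
    (y : ℕ → ℝ) (hy : ∀ n, 0 < y n)
    (hrec : ∀ n, y (n + 1) ≤ c * b ^ n * y n ^ (1 + α))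
    (h0 : y 0 ≤ c ^ (-(1 / α)) * b ^ (-(1 / α ^ 2))) :
    Tendsto y atTop (nhds 0) := by
  have hb0 : (0:ℝ) < b := lt_trans one_pos hb
  have key : ∀ n : ℕ, y n ≤ c ^ (-(1 / α)) * b ^ (-(1 / α ^ 2) - n / α) := by
    intro n
    induction n with
    | zero => simpa using h0
    | succ n ih =>
      have h1 : y (n + 1) ≤ c * b ^ n *
          (c ^ (-(1 / α)) * b ^ (-(1 / α ^ 2) - n / α)) ^ (1 + α) := by
        refine (hrec n).trans ?_
        have hpos : (0:ℝ) < c * b ^ n := by positivity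
        exact mul_le_mul_of_nonneg_left
          (Real.rpow_le_rpow (hy n).le ih (by linarith)) hpos.le
      refine h1.trans_eq ?_
      rw [Real.mul_rpow (by positivity) (by positivity),
        ← Real.rpow_natCast b n,
        ← Real.rpow_mul hc.le, ← Real.rpow_mul hb0.le,
        show c * b ^ (n:ℝ) * (c ^ (-(1 / α) * (1 + α)) *
          b ^ ((-(1 / α ^ 2) - (n:ℝ) / α) * (1 + α))) =
          (c ^ (1:ℝ) * c ^ (-(1 / α) * (1 + α))) *
          (b ^ (n:ℝ) * b ^ ((-(1 / α ^ 2) - (n:ℝ) / α) * (1 + α))) by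
            rw [Real.rpow_one]; ring,
        ← Real.rpow_add hc, ← Real.rpow_add hb0]
      push_cast
      rw [show (1:ℝ) + -(1/α)*(1+α) = -(1/α) by field_simp; ring,
        show (n:ℝ) + (-(1/α^2) - (n:ℝ)/α)*(1+α) = -(1/α^2) - ((n:ℝ)+1)/α by
          field_simp; ring]
  have hr0 : (0:ℝ) < b ^ (-(1 / α)) := Real.rpow_pos_of_pos hb0 _
  have hr1 : b ^ (-(1 / α)) < 1 :=
    Real.rpow_lt_one_of_one_lt_of_neg hb (by linarith [one_div_pos.mpr hα])
  have htend := (tendsto_pow_atTop_nhds_zero_of_lt_one hr0.le hr1).const_mul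
    (c ^ (-(1 / α)) * b ^ (-(1 / α ^ 2)))
  rw [mul_zero] at htend
  refine tendsto_of_tendsto_of_tendsto_of_le_of_le tendsto_const_nhds htend
    (fun n => (hy n).le) (fun n => ?_)
  calc y n ≤ c ^ (-(1 / α)) * b ^ (-(1 / α ^ 2) - n / α) := key n
    _ = c ^ (-(1 / α)) * b ^ (-(1 / α ^ 2)) * (b ^ (-(1 / α))) ^ n := by
        rw [← Real.rpow_natCast (b ^ (-(1/α))) n, ← Real.rpow_mul hb0.le,
          mul_assoc, ← Real.rpow_add hb0]
        ring_nf
end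

section
/- Let h : [0, T₀] → ℝ be a continuous nonnegative function, and suppose there exist positive numbers ε, δ, b such that h(τ) ≤ ε·h(τ)^{1+δ} + b for every τ ∈ [0, T₀]. If ε ≤ δ^δ / ((b+δ)^δ · (1+δ)^{1+δ}) and h(0) ≤ s₀ where s₀ = (ε(1+δ))^{-1/δ}, then h(τ) ≤ s₀ for every τ ∈ [0, T₀]. -/
theorem stmt_2 (T₀ ε δ b : ℝ) (hT : 0 < T₀) (hε : 0 < ε) (hδ : 0 < δ) (hb : 0 < b)
    (h : ℝ → ℝ) (hcont : ContinuousOn h (Set.Icc 0 T₀))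
    (hnonneg : ∀ τ ∈ Set.Icc 0 T₀, 0 ≤ h τ)
    (hineq : ∀ τ ∈ Set.Icc 0 T₀, h τ ≤ ε * h τ ^ (1 + δ) + b)
    (hεsmall : ε ≤ δ ^ δ / ((b + δ) ^ δ * (1 + δ) ^ (1 + δ)))
    (h0 : h 0 ≤ (ε * (1 + δ)) ^ (-(1 / δ))) :
    ∀ τ ∈ Set.Icc 0 T₀, h τ ≤ (ε * (1 + δ)) ^ (-(1 / δ)) := by
  set s₀ : ℝ := (ε * (1 + δ)) ^ (-(1 / δ)) with hs₀def
  have hδ1 : (0:ℝ) < 1 + δ := by linarith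
  have hεδ : 0 < ε * (1 + δ) := by positivity
  have hs₀pos : 0 < s₀ := Real.rpow_pos_of_pos hεδ _
  have hid : s₀ ^ δ = (ε * (1 + δ))⁻¹ := by
    rw [hs₀def, ← Real.rpow_mul hεδ.le]
    rw [show -(1 / δ) * δ = -1 by field_simp]
    exact Real.rpow_neg_one _
  have hkey1 : ε * s₀ ^ (1 + δ) = s₀ / (1 + δ) := by
    rw [Real.rpow_add hs₀pos, Real.rpow_one, hid]
    field_simp
  have hAb : (0:ℝ) < δ / ((b + δ) * (1 + δ)) := by positivity
  have hbd : (0:ℝ) < (b + δ) ^ δ := Real.rpow_pos_of_pos (by linarith) _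
  have h1d : (0:ℝ) < (1 + δ) ^ δ := Real.rpow_pos_of_pos hδ1 _
  have h1 : (1 + δ) ^ (1 + δ) = (1 + δ) * (1 + δ) ^ δ := by
    rw [Real.rpow_add hδ1, Real.rpow_one]
  have h2 : (δ / ((b + δ) * (1 + δ))) ^ δ = δ ^ δ / ((b + δ) ^ δ * (1 + δ) ^ δ) := by
    rw [Real.div_rpow hδ.le (by positivity), Real.mul_rpow (by positivity) hδ1.le]
  have hεδle : ε * (1 + δ) ≤ (δ / ((b + δ) * (1 + δ))) ^ δ := by
    rw [h1] at hεsmall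
    calc ε * (1 + δ)
        ≤ δ ^ δ / ((b + δ) ^ δ * ((1 + δ) * (1 + δ) ^ δ)) * (1 + δ) :=
          mul_le_mul_of_nonneg_right hεsmall hδ1.le
      _ = δ ^ δ / ((b + δ) ^ δ * (1 + δ) ^ δ) := by
          field_simp
      _ = (δ / ((b + δ) * (1 + δ))) ^ δ := h2.symm
  have hs₀lb : (b + δ) * (1 + δ) / δ ≤ s₀ := by
    have hmono := Real.rpow_le_rpow_of_nonpos hεδ hεδle
      (neg_nonpos.mpr (by positivity : (0:ℝ) ≤ 1 / δ))
    have hlhs : ((δ / ((b + δ) * (1 + δ))) ^ δ) ^ (-(1 / δ)) = (b + δ) * (1 + δ) / δ := by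
      rw [← Real.rpow_mul hAb.le, show δ * -(1 / δ) = -1 by field_simp,
        Real.rpow_neg_one, inv_div]
    rw [hlhs] at hmono
    exact hmono
  have hs₀lb' : (b + δ) * (1 + δ) ≤ s₀ * δ := (div_le_iff₀ hδ).mp hs₀lb
  -- main barrier bound: ε s₀^{1+δ} + b < s₀
  have hbar : ε * s₀ ^ (1 + δ) + b < s₀ := by
    rw [hkey1]
    have hcancel : s₀ / (1 + δ) * (1 + δ) = s₀ := div_mul_cancel₀ _ hδ1.ne'
    have h3 : (s₀ / (1 + δ) + b) * (1 + δ) < s₀ * (1 + δ) := by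
      nlinarith [mul_pos hδ hδ1]
    exact lt_of_mul_lt_mul_right h3 hδ1.le
  intro τ hτ
  by_contra hgt
  push_neg at hgt
  obtain ⟨hτ0, hτT⟩ := hτ
  have hsub : Set.Icc (0:ℝ) τ ⊆ Set.Icc 0 T₀ := Set.Icc_subset_Icc le_rfl hτT
  obtain ⟨c, hc1, hc2⟩ :=
    intermediate_value_Icc hτ0 (hcont.mono hsub) ⟨h0, hgt.le⟩
  have hc3 := hineq c (hsub hc1)
  rw [hc2] at hc3
  linarith
end

section
/- Let ε, δ, b > 0 with ε ≤ δ^δ / ((b+δ)^δ·(1+δ)^{1+δ}), and let f(s) = ε·s^{1+δ} − s + b. Then the equation f(s) = 0 has exactly two solutions 0 < s₁ < s₂ on (0,∞), and s₁ < (ε(1+δ))^{-1/δ} < s₂; moreover f is strictly positive on [0, s₁), strictly negative on (s₁, s₂), and strictly positive on (s₂, ∞). -/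
open Real Set

theorem stmt_5 (ε δ b : ℝ) (hε : 0 < ε) (hδ : 0 < δ) (hb : 0 < b)
    (hεsmall : ε ≤ δ ^ δ / ((b + δ) ^ δ * (1 + δ) ^ (1 + δ)))
    (f : ℝ → ℝ) (hf : ∀ s, 0 ≤ s → f s = ε * s ^ (1 + δ) - s + b) :
    ∃ s₁ s₂ : ℝ, 0 < s₁ ∧ s₁ < s₂ ∧ f s₁ = 0 ∧ f s₂ = 0 ∧
      (∀ s, 0 < s → f s = 0 → s = s₁ ∨ s = s₂) ∧
      s₁ < (ε * (1 + δ)) ^ (-(1 / δ)) ∧ (ε * (1 + δ)) ^ (-(1 / δ)) < s₂ ∧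
      (∀ s, 0 ≤ s → s < s₁ → 0 < f s) ∧
      (∀ s, s₁ < s → s < s₂ → f s < 0) ∧
      (∀ s, s₂ < s → 0 < f s) := by
  set g : ℝ → ℝ := fun s => ε * s ^ (1 + δ) - s + b with hg
  have key : ∀ s : ℝ, 0 ≤ s → f s = g s := fun s hs => (hf s hs).trans (by rw [hg])
  set m : ℝ := (ε * (1 + δ)) ^ (-(1 / δ)) with hm
  have h1δ : (0:ℝ) < 1 + δ := by linarith
  have hA : 0 < ε * (1 + δ) := by positivity
  have hm0 : 0 < m := Real.rpow_pos_of_pos hA _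
  -- key identity
  have hmδ : (ε * (1 + δ)) * m ^ δ = 1 := by
    have h : m ^ δ = (ε * (1 + δ))⁻¹ := by
      rw [hm, ← Real.rpow_mul hA.le, show -(1/δ) * δ = -1 by field_simp,
        Real.rpow_neg_one]
    rw [h, mul_inv_cancel₀ hA.ne']
  -- derivative
  have hd : ∀ x : ℝ, HasDerivAt g (ε * (1 + δ) * x ^ δ - 1) x := by
    intro x
    have h1 : HasDerivAt (fun x : ℝ => x ^ (1 + δ)) ((1 + δ) * x ^ (1 + δ - 1)) x :=
      Real.hasDerivAt_rpow_const (Or.inr (by linarith))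
    rw [show (1 + δ - 1) = δ by ring] at h1
    have := ((h1.const_mul ε).sub (hasDerivAt_id x)).add_const b
    rw [show ε * (1 + δ) * x ^ δ - 1 = ε * ((1 + δ) * x ^ δ) - 1 by ring]
    exact this
  have hgc : Continuous g := by
    rw [continuous_iff_continuousAt]; exact fun x => (hd x).continuousAt
  -- strict antitone on [0, m], strict monotone on [m, ∞)
  have hanti : StrictAntiOn g (Icc 0 m) := by
    apply strictAntiOn_of_deriv_neg (convex_Icc 0 m) hgc.continuousOn
    intro x hx
    rw [interior_Icc] at hx
    rw [(hd x).deriv]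
    have : x ^ δ < m ^ δ := Real.rpow_lt_rpow hx.1.le hx.2 hδ
    nlinarith
  have hmono : StrictMonoOn g (Ici m) := by
    apply strictMonoOn_of_deriv_pos (convex_Ici m) hgc.continuousOn
    intro x hx
    rw [interior_Ici] at hx
    rw [(hd x).deriv]
    have : m ^ δ < x ^ δ := Real.rpow_lt_rpow hm0.le hx hδ
    nlinarith
  have hg0 : g 0 = b := by
    simp [hg, Real.zero_rpow (by positivity : (1:ℝ) + δ ≠ 0)]
  -- g m < 0
  have hgm : g m < 0 := by
    have hmpow : m ^ (1 + δ) = m * m ^ δ := by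
      rw [Real.rpow_add hm0, Real.rpow_one]
    have hεm : ε * m ^ δ = 1 / (1 + δ) := by
      field_simp
      nlinarith
    have hp1 : (0:ℝ) < b ^ δ := Real.rpow_pos_of_pos hb _
    have hp2 : (0:ℝ) < (1 + δ) ^ δ := Real.rpow_pos_of_pos h1δ _
    have hp3 : (0:ℝ) < δ ^ δ := Real.rpow_pos_of_pos hδ _
    have hp4 : (0:ℝ) < (b + δ) ^ δ := Real.rpow_pos_of_pos (by linarith) _
    have h2 : (1 + δ) ^ (1 + δ) = (1 + δ) * (1 + δ) ^ δ := by
      rw [Real.rpow_add h1δ, Real.rpow_one]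
    have step1 : ε * (1 + δ) ≤ δ ^ δ / ((b + δ) ^ δ * (1 + δ) ^ δ) := by
      rw [h2] at hεsmall
      calc ε * (1 + δ) ≤ δ ^ δ / ((b + δ) ^ δ * ((1 + δ) * (1 + δ) ^ δ)) * (1 + δ) := by
            nlinarith
        _ = δ ^ δ / ((b + δ) ^ δ * (1 + δ) ^ δ) := by
            field_simp
    have step2 : δ ^ δ / ((b + δ) ^ δ * (1 + δ) ^ δ) < δ ^ δ / (b ^ δ * (1 + δ) ^ δ) := by
      apply div_lt_div_of_pos_left hp3 (by positivity)
      have : b ^ δ < (b + δ) ^ δ := Real.rpow_lt_rpow hb.le (by linarith) hδ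
      nlinarith
    have hC : (0:ℝ) < δ / (b * (1 + δ)) := by positivity
    have h3 : (δ / (b * (1 + δ))) ^ δ = δ ^ δ / (b ^ δ * (1 + δ) ^ δ) := by
      rw [Real.div_rpow hδ.le (by positivity), Real.mul_rpow hb.le h1δ.le]
    have h1 : ε * (1 + δ) < (δ / (b * (1 + δ))) ^ δ := by
      rw [h3]; exact step1.trans_lt step2
    have h5 : ((δ / (b * (1 + δ))) ^ δ) ^ (-(1/δ)) < m :=
      Real.rpow_lt_rpow_of_neg hA h1 (neg_lt_zero.mpr (by positivity))
    have h6 : ((δ / (b * (1 + δ))) ^ δ) ^ (-(1/δ)) = b * (1 + δ) / δ := by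
      rw [← Real.rpow_mul hC.le, show δ * -(1/δ) = -1 by field_simp,
        Real.rpow_neg_one]
      field_simp
    have hmbig : b * (1 + δ) / δ < m := h6 ▸ h5
    have hδm : b < m * δ / (1 + δ) := by
      rw [lt_div_iff₀ h1δ]
      calc b * (1 + δ) = b * (1 + δ) / δ * δ := by field_simp
        _ < m * δ := mul_lt_mul_of_pos_right hmbig hδ
    have : ε * m ^ (1 + δ) = m / (1 + δ) := by
      rw [hmpow, ← mul_assoc, mul_comm ε m, mul_assoc, hεm]; ring
    have hgme : g m = m / (1 + δ) - m + b := by rw [hg]; simp only; rw [this]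
    rw [hgme]
    have : m / (1 + δ) - m = -(m * δ / (1 + δ)) := by field_simp; ring
    rw [this]; linarith
  -- first root
  obtain ⟨s₁, hs₁mem, hgs₁⟩ : ∃ s₁ ∈ Icc 0 m, g s₁ = 0 := by
    have h := intermediate_value_Icc' hm0.le hgc.continuousOn
    have h0 : (0:ℝ) ∈ Icc (g m) (g 0) := ⟨hgm.le, by rw [hg0]; exact hb.le⟩
    obtain ⟨s, hs, hgs⟩ := h h0
    exact ⟨s, hs, hgs⟩
  have hs₁0 : 0 < s₁ := by
    rcases hs₁mem.1.lt_or_eq with h | h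
    · exact h
    · exfalso; rw [← h, hg0] at hgs₁; linarith
  have hs₁m : s₁ < m := by
    rcases hs₁mem.2.lt_or_eq with h | h
    · exact h
    · exfalso; rw [h] at hgs₁; linarith
  -- big point T
  set T : ℝ := max m ((2/ε) ^ (1/δ)) with hT
  have hTm : m ≤ T := le_max_left _ _
  have hT0 : 0 < T := lt_of_lt_of_le hm0 hTm
  have hTδ : 2/ε ≤ T ^ δ := by
    have e1 : ((2/ε) ^ (1/δ)) ^ δ = 2/ε := by
      rw [← Real.rpow_mul (by positivity : (0:ℝ) ≤ 2/ε),
        show 1/δ * δ = 1 by field_simp, Real.rpow_one]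
    calc 2/ε = ((2/ε) ^ (1/δ)) ^ δ := e1.symm
      _ ≤ T ^ δ := Real.rpow_le_rpow (by positivity) (le_max_right _ _) hδ.le
  have hgT : 0 < g T := by
    have hTpow : T ^ (1 + δ) = T * T ^ δ := by
      rw [Real.rpow_add hT0, Real.rpow_one]
    have h2 : 2 ≤ ε * T ^ δ := by
      rw [div_le_iff₀ hε, mul_comm] at hTδ
      linarith
    have : g T = T * (ε * T ^ δ) - T + b := by rw [hg]; simp only; rw [hTpow]; ring
    rw [this]
    nlinarith
  obtain ⟨s₂, hs₂mem, hgs₂⟩ : ∃ s₂ ∈ Icc m T, g s₂ = 0 := by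
    have h := intermediate_value_Icc hTm hgc.continuousOn
    have h0 : (0:ℝ) ∈ Icc (g m) (g T) := ⟨hgm.le, hgT.le⟩
    obtain ⟨s, hs, hgs⟩ := h h0
    exact ⟨s, hs, hgs⟩
  have hs₂m : m < s₂ := by
    rcases hs₂mem.1.lt_or_eq with h | h
    · exact h
    · exfalso; rw [← h] at hgs₂; linarith
  have hs₂0 : 0 < s₂ := hm0.trans hs₂m
  refine ⟨s₁, s₂, hs₁0, hs₁m.trans hs₂m, ?_, ?_, ?_, hs₁m, hs₂m, ?_, ?_, ?_⟩
  · rw [key s₁ hs₁0.le]; exact hgs₁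
  · rw [key s₂ hs₂0.le]; exact hgs₂
  · intro s hs hfs
    rw [key s hs.le] at hfs
    rcases le_or_gt s m with h | h
    · left
      exact hanti.injOn ⟨hs.le, h⟩ ⟨hs₁0.le, hs₁m.le⟩ (by rw [hfs, hgs₁])
    · right
      exact hmono.injOn (mem_Ici.mpr h.le) (mem_Ici.mpr hs₂m.le) (by rw [hfs, hgs₂])
  · intro s hs0 hss₁
    rw [key s hs0]
    have := hanti ⟨hs0, (hss₁.trans hs₁m).le⟩ ⟨hs₁0.le, hs₁m.le⟩ hss₁
    rw [hgs₁] at this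
    linarith
  · intro s hs₁s hss₂
    have hs0 : 0 < s := hs₁0.trans hs₁s
    rw [key s hs0.le]
    rcases le_or_gt s m with h | h
    · have := hanti ⟨hs₁0.le, hs₁m.le⟩ ⟨hs0.le, h⟩ hs₁s
      rw [hgs₁] at this
      linarith
    · have := hmono (mem_Ici.mpr h.le) (mem_Ici.mpr hs₂m.le) hss₂
      rw [hgs₂] at this
      linarith
  · intro s hs₂s
    have hs0 : 0 < s := hs₂0.trans hs₂s
    rw [key s hs0.le]
    have := hmono (mem_Ici.mpr hs₂m.le) (mem_Ici.mpr (hs₂m.le.trans hs₂s.le)) hs₂s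
    rw [hgs₂] at this
    linarith
end
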